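/- arXiv:1602.00996 — 2 statements merged into one kernel-verified Lean document; each statement's English description precedes it below -/
import Mathlib

section
/- Let μ ∈ ℂ and let a₋₁, a₁ ∈ ℂ[z]. The pair (φ₋₁, φ₁) := (a₋₁(z)·∇⁻¹, a₁(z)·∇) (multiplication by a₋₁ composed with ∇⁻¹, and multiplication by a₁ composed with ∇) is a Casimir representation of semi-level μ on ℂ[z] if and only if there exists γ ∈ ℂ∖{0} such that (a₋₁(z), a₁(z)) is one of the following: (I) (γ⁻¹, γ·(z+μ+1)(z−μ)); (II) (γ⁻¹·(z−μ−1), γ·(z+μ+1)); (III) (γ⁻¹·(z+μ), γ·(z−μ)); (IV) (γ⁻¹·(z+μ)(z−μ−1), γ). -/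
open Polynomial

/-- The shift automorphism `∇ : ℂ[z] → ℂ[z]`, `p(z) ↦ p(z+1)`. -/
noncomputable def nabla : Polynomial ℂ ≃ₐ[ℂ] Polynomial ℂ := algEquivAevalXAddC 1

/-- `End_k(V)`: additive endomorphisms with `φ(p • v) = (∇^k p) • φ(v)`. -/
def IsSemilinearEnd {M : Type*} [AddCommMonoid M] [Module (Polynomial ℂ) M]
    (k : ℤ) (φ : M → M) : Prop :=
  (∀ v w : M, φ (v + w) = φ v + φ w) ∧
  ∀ (p : Polynomial ℂ) (v : M), φ (p • v) = ((nabla ^ k) p) • φ v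

/-- `π_μ(z) = (z+μ)(z-μ-1)`. -/
noncomputable def piMu (μ : ℂ) : Polynomial ℂ := (X + C μ) * (X - C μ - 1)

/-- A Casimir representation of semi-level `μ` on a `ℂ[z]`-module `M`:
a pair `(φ₋₁, φ₁)` of semilinear endomorphisms of degrees `-1` and `1` with
`φ₋₁ ∘ φ₁ = π_μ(z)·` and `φ₁ ∘ φ₋₁ = π_μ(z+1)·`. -/
def IsCasimirRep {M : Type*} [AddCommMonoid M] [Module (Polynomial ℂ) M]
    (μ : ℂ) (φm φp : M → M) : Prop :=
  IsSemilinearEnd (-1) φm ∧ IsSemilinearEnd 1 φp ∧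
  (∀ v, φm (φp v) = piMu μ • v) ∧
  (∀ v, φp (φm v) = (nabla (piMu μ)) • v)

lemma nabla_apply (p : Polynomial ℂ) : nabla p = aeval (X + 1 : Polynomial ℂ) p := by
  simp [nabla, algEquivAevalXAddC]

lemma nabla_symm_apply (p : Polynomial ℂ) : nabla.symm p = aeval (X - 1 : Polynomial ℂ) p := by
  simp [nabla, algEquivAevalXAddC]

lemma key (μ : ℂ) (am a1 : Polynomial ℂ) :
    IsCasimirRep μ (fun p : Polynomial ℂ => am * nabla.symm p)
        (fun p : Polynomial ℂ => a1 * nabla p) ↔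
    am * nabla.symm a1 = piMu μ := by
  constructor
  · rintro ⟨_, _, h, _⟩
    have := h 1
    simpa [smul_eq_mul] using this
  · intro h
    refine ⟨⟨?_, ?_⟩, ⟨?_, ?_⟩, ?_, ?_⟩
    · intro v w; simp only [map_add]; ring
    · intro p v
      rw [zpow_neg_one]
      show am * nabla.symm (p * v) = (nabla⁻¹ p) * (am * nabla.symm v)
      have : (nabla⁻¹ : Polynomial ℂ ≃ₐ[ℂ] Polynomial ℂ) p = nabla.symm p := rfl
      rw [this, map_mul]; ring
    · intro v w; simp only [map_add]; ring
    · intro p v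
      rw [zpow_one]
      show a1 * nabla (p * v) = nabla p * (a1 * nabla v)
      rw [map_mul]; ring
    · intro v
      show am * nabla.symm (a1 * nabla v) = piMu μ • v
      rw [map_mul, AlgEquiv.symm_apply_apply, smul_eq_mul, ← h]; ring
    · intro v
      show a1 * nabla (am * nabla.symm v) = nabla (piMu μ) • v
      rw [map_mul, AlgEquiv.apply_symm_apply, smul_eq_mul, ← h, map_mul,
        AlgEquiv.apply_symm_apply]
      ring

lemma classify (μ : ℂ) (am b : Polynomial ℂ) (h : am * b = piMu μ) :
    ∃ γ : ℂ, γ ≠ 0 ∧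
      ((am = C γ⁻¹ ∧ b = C γ * ((X + C μ) * (X - C μ - 1))) ∨
       (am = C γ⁻¹ * (X - C μ - 1) ∧ b = C γ * (X + C μ)) ∨
       (am = C γ⁻¹ * (X + C μ) ∧ b = C γ * (X - C μ - 1)) ∨
       (am = C γ⁻¹ * ((X + C μ) * (X - C μ - 1)) ∧ b = C γ)) := by
  have hXm : (X + C μ : Polynomial ℂ) = X - C (-μ) := by simp
  have hXs : (X - C μ - 1 : Polynomial ℂ) = X - C (μ + 1) := by
    rw [map_add, map_one]; ring
  have h1ne : (X + C μ : Polynomial ℂ) ≠ 0 := by rw [hXm]; exact X_sub_C_ne_zero _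
  have h2ne : (X - C μ - 1 : Polynomial ℂ) ≠ 0 := by rw [hXs]; exact X_sub_C_ne_zero _
  have hpne : piMu μ ≠ 0 := mul_ne_zero h1ne h2ne
  have ham : am ≠ 0 := fun h0 => hpne (by rw [← h, h0, zero_mul])
  have hb : b ≠ 0 := fun h0 => hpne (by rw [← h, h0, mul_zero])
  have hdeg : am.natDegree + b.natDegree = 2 := by
    rw [← natDegree_mul ham hb, h, piMu, hXm, hXs, natDegree_mul (X_sub_C_ne_zero _)
      (X_sub_C_ne_zero _), natDegree_X_sub_C, natDegree_X_sub_C]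
  have hle : am.natDegree = 0 ∨ am.natDegree = 1 ∨ am.natDegree = 2 := by omega
  rcases hle with hd | hd | hd
  · -- am constant
    rw [hd] at hdeg
    have hc : am = C (am.coeff 0) := eq_C_of_natDegree_eq_zero hd
    set c := am.coeff 0 with hcc
    have hcne : c ≠ 0 := fun h0 => ham (by rw [hc, h0, map_zero])
    refine ⟨c⁻¹, inv_ne_zero hcne, Or.inl ⟨by rw [hc, inv_inv], ?_⟩⟩
    have : C c⁻¹ * (am * b) = C c⁻¹ * piMu μ := by rw [h]
    rw [hc, ← mul_assoc, ← map_mul, inv_mul_cancel₀ hcne, map_one, one_mul] at this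
    rw [this, piMu]
  · -- both linear
    rw [hd] at hdeg
    have hc : am = C (am.coeff 1) * X + C (am.coeff 0) :=
      eq_X_add_C_of_degree_le_one (degree_le_of_natDegree_le (n := 1) hd.le)
    set c := am.coeff 1 with hcc
    set e := am.coeff 0 with hee
    have hcne : c ≠ 0 := by
      have := (leadingCoeff_ne_zero (p := am)).mpr ham
      rwa [leadingCoeff, hd] at this
    have hev : am.eval (-(e/c)) = 0 := by
      rw [hc]; simp; field_simp; ring
    have hpz : (piMu μ).eval (-(e/c)) = 0 := by
      rw [← h, eval_mul, hev, zero_mul]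
    have hroot : -(e/c) = -μ ∨ -(e/c) = μ + 1 := by
      rw [piMu] at hpz
      simp only [eval_mul, eval_add, eval_sub, eval_X, eval_C, eval_one] at hpz
      rcases mul_eq_zero.mp hpz with h' | h'
      · left; linear_combination h'
      · right; linear_combination h'
    rcases hroot with hr | hr
    · -- e = c*μ, am = C c * (X + C μ)
      have he : e = c * μ := by field_simp at hr; linear_combination -hr
      have ham2 : am = C c * (X + C μ) := by
        rw [hc, he, map_mul]; ring
      have hcan : (X + C μ) * (C c * b) = (X + C μ) * (X - C μ - 1) := by
        rw [ham2, piMu] at h; linear_combination h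
      have hcb : C c * b = X - C μ - 1 := mul_left_cancel₀ h1ne hcan
      refine ⟨c⁻¹, inv_ne_zero hcne, Or.inr (Or.inr (Or.inl ⟨by rw [ham2, inv_inv], ?_⟩))⟩
      rw [← hcb, ← mul_assoc, ← map_mul, inv_mul_cancel₀ hcne, map_one, one_mul]
    · -- e = -c*(μ+1), am = C c * (X - C μ - 1)
      have he : e = -(c * (μ + 1)) := by field_simp at hr; linear_combination -hr
      have ham2 : am = C c * (X - C μ - 1) := by
        rw [hc, he, map_neg, map_mul, map_add, map_one]; ring
      have hcan : (X - C μ - 1) * (C c * b) = (X - C μ - 1) * (X + C μ) := by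
        rw [ham2, piMu] at h; linear_combination h
      have hcb : C c * b = X + C μ := mul_left_cancel₀ h2ne hcan
      refine ⟨c⁻¹, inv_ne_zero hcne, Or.inr (Or.inl ⟨by rw [ham2, inv_inv], ?_⟩)⟩
      rw [← hcb, ← mul_assoc, ← map_mul, inv_mul_cancel₀ hcne, map_one, one_mul]
  · -- b constant
    rw [hd] at hdeg
    have hb0 : b.natDegree = 0 := by omega
    have hc : b = C (b.coeff 0) := eq_C_of_natDegree_eq_zero hb0
    set d := b.coeff 0 with hdd
    have hdne : d ≠ 0 := fun h0 => hb (by rw [hc, h0, map_zero])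
    refine ⟨d, hdne, Or.inr (Or.inr (Or.inr ⟨?_, hc⟩))⟩
    have : (am * b) * C d⁻¹ = piMu μ * C d⁻¹ := by rw [h]
    rw [hc, mul_assoc, ← map_mul, mul_inv_cancel₀ hdne, map_one, mul_one] at this
    rw [this, piMu]; ring

/-- classification of the rank-one Casimir representations of semi-level `μ`:
`(a₋₁·∇⁻¹, a₁·∇)` is a Casimir representation on `ℂ[z]` iff, for some `γ ∈ ℂ∖{0}`,
`(a₋₁, a₁)` is one of
(I) `(γ⁻¹, γ(z+μ+1)(z−μ))`, (II) `(γ⁻¹(z−μ−1), γ(z+μ+1))`,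
(III) `(γ⁻¹(z+μ), γ(z−μ))`, (IV) `(γ⁻¹(z+μ)(z−μ−1), γ)`. -/
theorem stmt_10 (μ : ℂ) (am a1 : Polynomial ℂ) :
    IsCasimirRep μ (fun p : Polynomial ℂ => am * nabla.symm p)
        (fun p : Polynomial ℂ => a1 * nabla p) ↔
      ∃ γ : ℂ, γ ≠ 0 ∧
        ((am = C γ⁻¹ ∧ a1 = C γ * ((X + C μ + 1) * (X - C μ))) ∨
         (am = C γ⁻¹ * (X - C μ - 1) ∧ a1 = C γ * (X + C μ + 1)) ∨
         (am = C γ⁻¹ * (X + C μ) ∧ a1 = C γ * (X - C μ)) ∨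
         (am = C γ⁻¹ * ((X + C μ) * (X - C μ - 1)) ∧ a1 = C γ)) := by
  rw [key]
  constructor
  · intro h
    obtain ⟨γ, hγ, hcases⟩ := classify μ am (nabla.symm a1) h
    refine ⟨γ, hγ, ?_⟩
    have ha1 : ∀ q : Polynomial ℂ, nabla.symm a1 = q → a1 = nabla q := by
      intro q hq; rw [← hq, AlgEquiv.apply_symm_apply]
    rcases hcases with ⟨h1, h2⟩ | ⟨h1, h2⟩ | ⟨h1, h2⟩ | ⟨h1, h2⟩
    · exact Or.inl ⟨h1, by rw [ha1 _ h2]; simp only [nabla_apply, map_mul, map_add, map_sub, map_one, aeval_X, aeval_C, algebraMap_eq]; ring⟩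
    · exact Or.inr (Or.inl ⟨h1, by rw [ha1 _ h2]; simp only [nabla_apply, map_mul, map_add, map_sub, map_one, aeval_X, aeval_C, algebraMap_eq]; ring⟩)
    · exact Or.inr (Or.inr (Or.inl ⟨h1, by rw [ha1 _ h2]; simp only [nabla_apply, map_mul, map_add, map_sub, map_one, aeval_X, aeval_C, algebraMap_eq]; ring⟩))
    · exact Or.inr (Or.inr (Or.inr ⟨h1, by rw [ha1 _ h2]; simp only [nabla_apply, map_mul, aeval_C, algebraMap_eq, map_one]⟩))
  · rintro ⟨γ, hγ, ⟨h1, h2⟩ | ⟨h1, h2⟩ | ⟨h1, h2⟩ | ⟨h1, h2⟩⟩ <;>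
      subst h1 <;> subst h2 <;>
      · simp only [nabla_symm_apply, piMu, map_mul, map_add, map_sub, map_one,
          aeval_X, aeval_C]
        simp only [algebraMap_eq]
        have hγγ : (C γ⁻¹ : Polynomial ℂ) * C γ = 1 := by
          rw [← C_mul, inv_mul_cancel₀ hγ, C_1]
        linear_combination ((X + C μ) * (X - C μ - 1) : Polynomial ℂ) * hγγ
end

section
/- Let μ ∈ ℂ and γ ∈ ℂ∖{0}. The rank-one Casimir representations of semi-level μ of type I, given by (φ₋₁, φ₁) = (γ⁻¹·∇⁻¹, γ·(z+μ+1)(z−μ)·∇) on ℂ[z], and of type IV, given by (φ₋₁, φ₁) = (γ⁻¹·(z+μ)(z−μ−1)·∇⁻¹, γ·∇) on ℂ[z], are irreducible: their only sl(2)-submodules are 0 and ℂ[z]. -/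
open Polynomial

/-- An `sl(2)`-representation `(φ₋₁, φ₁)` on a `ℂ[z]`-module is irreducible if its only
invariant `ℂ[z]`-submodules are `0` and the whole module. -/
def IsIrreducibleRep {M : Type*} [AddCommGroup M] [Module (Polynomial ℂ) M]
    (φm φp : M → M) : Prop :=
  ∀ W : Submodule (Polynomial ℂ) M,
    (∀ w ∈ W, φm w ∈ W) → (∀ w ∈ W, φp w ∈ W) → W = ⊥ ∨ W = ⊤

lemma no_shift_fixed (a : ℂ) (ha : a ≠ 0) (p : Polynomial ℂ) (hp : p ≠ 0)
    (h : p.comp (X + C a) = p) : p.natDegree = 0 := by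
  by_contra hd
  have hdeg : 0 < p.degree := natDegree_pos_iff_degree_pos.1 (Nat.pos_of_ne_zero hd)
  obtain ⟨r, hr⟩ := Complex.exists_root hdeg
  have key : ∀ n : ℕ, p.IsRoot (r + n * a) := by
    intro n
    induction n with
    | zero => simpa using hr
    | succ n ih =>
      have := congrArg (fun q => q.eval (r + n * a)) h
      simp only [eval_comp, eval_add, eval_X, eval_C] at this
      have : p.IsRoot (r + n * a + a) := by rw [IsRoot, this]; exact ih
      convert this using 1; push_cast; ring
  apply hp
  apply p.eq_zero_of_infinite_isRoot
  apply Set.infinite_of_injective_forall_mem (f := fun n : ℕ => r + n * a)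
  · intro m n hmn
    simp only [add_right_inj] at hmn
    exact_mod_cast mul_right_cancel₀ ha hmn
  · intro n; exact key n

lemma shift_invariant_ideal (a c : ℂ) (ha : a ≠ 0) (hc : c ≠ 0)
    (W : Submodule (Polynomial ℂ) (Polynomial ℂ))
    (hW : ∀ w ∈ W, C c * w.comp (X + C a) ∈ W) : W = ⊥ ∨ W = ⊤ := by
  by_cases hbot : W = ⊥
  · exact Or.inl hbot
  right
  obtain ⟨p, hpW, hp0⟩ := Submodule.exists_mem_ne_zero_of_ne_bot hbot
  have one_mem : ∀ n : ℕ, ∀ p ∈ W, p ≠ 0 → p.natDegree ≤ n → (1 : Polynomial ℂ) ∈ W := by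
    intro n
    induction n with
    | zero =>
      intro p hpW hp0 hdeg
      have hd0 : p.natDegree = 0 := Nat.le_zero.1 hdeg
      have hc0 : p.coeff 0 ≠ 0 := by
        intro h; exact hp0 (by rw [eq_C_of_natDegree_eq_zero hd0, h, map_zero])
      have := W.smul_mem (C (p.coeff 0)⁻¹) hpW
      rw [smul_eq_mul] at this
      have heq : C (p.coeff 0)⁻¹ * p = 1 := by
        nth_rewrite 2 [eq_C_of_natDegree_eq_zero hd0]
        rw [← map_mul, inv_mul_cancel₀ hc0, map_one]
      rwa [heq] at this
    | succ n ih =>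
      intro p hpW hp0 hdeg
      by_cases hd0 : p.natDegree = 0
      · exact ih p hpW hp0 (by omega)
      -- q := p(X+a) - p
      have hcomp_mem : p.comp (X + C a) ∈ W := by
        have := W.smul_mem (C c⁻¹) (hW p hpW)
        rw [smul_eq_mul, ← mul_assoc, ← map_mul, inv_mul_cancel₀ hc, map_one, one_mul] at this
        exact this
      set q := p.comp (X + C a) - p with hq
      have hqW : q ∈ W := Submodule.sub_mem W hcomp_mem hpW
      have hq0 : q ≠ 0 := by
        intro h
        rw [hq, sub_eq_zero] at h
        exact hd0 (no_shift_fixed a ha p hp0 h)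
      have hlin : (X + C a : Polynomial ℂ).natDegree = 1 := natDegree_X_add_C a
      have hlc : (p.comp (X + C a)).leadingCoeff = p.leadingCoeff := by
        rw [leadingCoeff_comp (by rw [hlin]; norm_num)]
        simp [leadingCoeff_X_add_C]
      have hcomp0 : p.comp (X + C a) ≠ 0 := by
        intro h
        rw [h, leadingCoeff_zero, eq_comm, leadingCoeff_eq_zero] at hlc
        exact hp0 hlc
      have hdcomp : (p.comp (X + C a)).degree = p.degree := by
        rw [degree_eq_natDegree hcomp0, degree_eq_natDegree hp0, natDegree_comp, hlin, mul_one]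
      have hdlt : q.degree < p.degree := by
        have := degree_sub_lt hdcomp hcomp0 hlc
        rwa [hdcomp] at this
      have : q.natDegree < p.natDegree := natDegree_lt_natDegree hq0 hdlt
      exact ih q hqW hq0 (by omega)
  have h1 : (1 : Polynomial ℂ) ∈ W := one_mem p.natDegree p hpW hp0 le_rfl
  rw [Submodule.eq_top_iff']
  intro x
  simpa using W.smul_mem x h1

lemma nabla_symm_eq (p : Polynomial ℂ) : nabla.symm p = p.comp (X + C (-1)) := by
  rw [nabla, algEquivAevalXAddC_symm]; rfl

lemma nabla_eq (p : Polynomial ℂ) : nabla p = p.comp (X + C 1) := rfl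

/-- the rank-one Casimir representations of semi-level `μ` of type I,
`(γ⁻¹·∇⁻¹, γ(z+μ+1)(z−μ)·∇)`, and of type IV, `(γ⁻¹(z+μ)(z−μ−1)·∇⁻¹, γ·∇)`, on `ℂ[z]`
are irreducible. -/
theorem stmt_11 (μ : ℂ) (γ : ℂ) (hγ : γ ≠ 0) :
    IsIrreducibleRep (fun p : Polynomial ℂ => C γ⁻¹ * nabla.symm p)
      (fun p : Polynomial ℂ => C γ * ((X + C μ + 1) * (X - C μ)) * nabla p) ∧
    IsIrreducibleRep (fun p : Polynomial ℂ => C γ⁻¹ * ((X + C μ) * (X - C μ - 1)) * nabla.symm p)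
      (fun p : Polynomial ℂ => C γ * nabla p) := by
  constructor
  · intro W hm _
    exact shift_invariant_ideal (-1) γ⁻¹ (by norm_num) (inv_ne_zero hγ) W
      (fun w hw => by simpa [nabla_symm_eq] using hm w hw)
  · intro W _ hp
    exact shift_invariant_ideal 1 γ one_ne_zero hγ W
      (fun w hw => by simpa [nabla_eq] using hp w hw)
end
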